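/- In the subgroup lattice of the symmetric group S₄, the six subgroups H₁ = ⟨(12)⟩, K₁ = ⟨(123),(12)⟩, H₂ = ⟨(13)⟩, K₂ = ⟨(134),(13)⟩, H₃ = ⟨(14)⟩ and K₃ = ⟨(124),(14)⟩ form a crown of order 6; consequently the subgroup lattice of S₄ is not dismantlable. -/

import Mathlib

/-- A finite lattice `L` with `n` elements is *dismantlable* if there is a chain
`L₁ ⊆ L₂ ⊆ ... ⊆ Lₙ = L` of sublattices of `L` with `|Lᵢ| = i` for `i = 1, ..., n`. -/
def Dismantlable (L : Type*) [Lattice L] [Finite L] : Prop :=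
  ∃ c : ℕ → Set L,
    (∀ i, 1 ≤ i → i ≤ Nat.card L → IsSublattice (c i) ∧ Nat.card (c i) = i) ∧
    (∀ i, 1 ≤ i → i < Nat.card L → c i ⊆ c (i + 1)) ∧
    c (Nat.card L) = Set.univ

/-- `x 0, y 0, x 1, y 1, ..., x (n-1), y (n-1)` form a *crown of order `2n`* (for `n ≥ 3`)
in a poset: the `2n` elements are pairwise distinct, and the only comparability relations
among them are `x i ≤ y i` and `x (i+1) ≤ y i` (indices mod `n`). -/
def IsCrown {P : Type*} [PartialOrder P] {n : ℕ} (x y : Fin n → P) : Prop :=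
  3 ≤ n ∧ Function.Injective x ∧ Function.Injective y ∧
  (∀ i j, x i ≠ y j) ∧
  (∀ i j, x i ≤ x j → i = j) ∧
  (∀ i j, y i ≤ y j → i = j) ∧
  (∀ i j, ¬ y i ≤ x j) ∧
  (∀ i j, x i ≤ y j ↔ (i = j ∨ (i : ℕ) = ((j : ℕ) + 1) % n))

section CrownErase

variable {L : Type*} [Lattice L]

lemma crown_erase {n : ℕ} {x y : Fin n → L} (h : IsCrown x y) {S : Set L}
    (hS : IsSublattice S) {a : L} (ha : a ∉ S)
    (hx : ∀ i, x i = a ∨ x i ∈ S) (hy : ∀ i, y i = a ∨ y i ∈ S) :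
    ∃ x' y' : Fin n → L, IsCrown x' y' ∧ (∀ i, x' i ∈ S) ∧ (∀ i, y' i ∈ S) := by
  obtain ⟨hn, hxinj, hyinj, hxy, hxx, hyy, hyx, hle⟩ := h
  haveI : NeZero n := ⟨by omega⟩
  have hval1 : ((1 : Fin n) : ℕ) = 1 := by
    rw [Fin.val_one' n]; exact Nat.mod_eq_of_lt (by omega)
  have coe_iff : ∀ i j : Fin n, ((i : ℕ) = ((j : ℕ) + 1) % n) ↔ i = j + 1 := by
    intro i j
    rw [Fin.ext_iff, Fin.val_add, hval1]
  have one_ne : (1 : Fin n) ≠ 0 := by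
    intro h; rw [Fin.ext_iff, hval1] at h; simp at h
  have two_ne : (1 + 1 : Fin n) ≠ 0 := by
    intro h; rw [Fin.ext_iff, Fin.val_add, hval1, Fin.val_zero] at h
    rw [Nat.mod_eq_of_lt (by omega)] at h; omega
  have hA : ∀ i : Fin n, i + 1 ≠ i := fun i h => one_ne (add_eq_left.1 h)
  have hC : ∀ i : Fin n, i - 1 ≠ i := fun i h => one_ne (sub_eq_self.1 h)
  have hB : ∀ i : Fin n, i - 1 ≠ i + 1 := by
    intro i h
    have h2 := sub_eq_iff_eq_add.1 h
    rw [add_assoc] at h2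
    exact two_ne (left_eq_add.1 h2)
  have hle' : ∀ i j, x i ≤ y j ↔ (i = j ∨ i = j + 1) := by
    intro i j; rw [hle, coe_iff]
  by_cases hax : ∃ i, x i = a
  · -- a = x i; replace x i by (y (i-1)) ⊓ (y i)
    obtain ⟨i, hi⟩ := hax
    have hyS : ∀ j, y j ∈ S := by
      intro j
      refine (hy j).resolve_left fun hj => hxy i j (by rw [hi, hj])
    have hxS : ∀ j, j ≠ i → x j ∈ S := by
      intro j hj
      refine (hx j).resolve_left fun hj' => hj (hxinj (by rw [hj', hi]))
    set m := y (i - 1) ⊓ y i with hm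
    have hmS : m ∈ S := hS.infClosed (hyS _) (hyS _)
    have hii1 : x i ≤ y (i - 1) := (hle' i (i - 1)).2 (Or.inr (sub_add_cancel i 1).symm)
    have hxm : x i ≤ m := le_inf hii1 ((hle' i i).2 (Or.inl rfl))
    have hm1 : m ≤ y (i - 1) := inf_le_left
    have hm2 : m ≤ y i := inf_le_right
    have key : ∀ j, m ≤ y j → (j = i ∨ j = i - 1) := by
      intro j hj
      rcases (hle' i j).1 (hxm.trans hj) with h' | h'
      · exact Or.inl h'.symm
      · exact Or.inr (sub_eq_iff_eq_add.2 h').symm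
    have keyx : ∀ j, x j ≤ m → j = i := by
      intro j hj
      rcases (hle' j i).1 (hj.trans hm2) with h' | h'
      · exact h'
      · exfalso
        rcases (hle' j (i - 1)).1 (hj.trans hm1) with h'' | h''
        · exact hB i (by rw [← h'', h'])
        · rw [sub_add_cancel] at h''
          exact hA i (by rw [← h', h''])
    have hmy : ∀ j, m ≠ y j := by
      intro j hj
      have hji : j = i := hyy j i (hj ▸ hm2)
      subst hji
      have : y j ≤ y (j - 1) := hj ▸ hm1
      exact hC j (hyy j (j-1) this).symm
    have hmx : ∀ j, j ≠ i → x j ≠ m := by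
      intro j hj hj'
      exact hj (keyx j (le_of_eq hj'))
    refine ⟨Function.update x i m, y, ⟨hn, ?_, hyinj, ?_, ?_, hyy, ?_, ?_⟩, ?_, hyS⟩
    · -- injective
      intro j k hjk
      by_cases hji : j = i <;> by_cases hki : k = i
      · rw [hji, hki]
      · subst hji; rw [Function.update_self, Function.update_of_ne hki] at hjk
        exact absurd (keyx k (le_of_eq hjk.symm)) hki
      · subst hki; rw [Function.update_self, Function.update_of_ne hji] at hjk
        exact absurd (keyx j (le_of_eq hjk)) hji
      · rw [Function.update_of_ne hji, Function.update_of_ne hki] at hjk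
        exact hxinj hjk
    · -- x' j ≠ y k
      intro j k
      by_cases hji : j = i
      · subst hji; rw [Function.update_self]; exact hmy k
      · rw [Function.update_of_ne hji]; exact hxy j k
    · -- x' j ≤ x' k → j = k
      intro j k hjk
      by_cases hji : j = i <;> by_cases hki : k = i
      · rw [hji, hki]
      · rw [hji, Function.update_self, Function.update_of_ne hki] at hjk
        exact absurd (hxx i k (hxm.trans hjk)).symm hki
      · subst hki; rw [Function.update_self, Function.update_of_ne hji] at hjk
        exact keyx j hjk
      · rw [Function.update_of_ne hji, Function.update_of_ne hki] at hjk
        exact hxx j k hjk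
    · -- ¬ y j ≤ x' k
      intro j k hjk
      by_cases hki : k = i
      · rw [hki, Function.update_self] at hjk
        have hji : j = i := hyy j i (hjk.trans hm2)
        exact hmy i (le_antisymm hm2 (hji ▸ hjk))
      · rw [Function.update_of_ne hki] at hjk
        exact hyx j k hjk
    · -- x' j ≤ y k iff
      intro j k
      rw [coe_iff]
      by_cases hji : j = i
      · subst hji
        rw [Function.update_self]
        constructor
        · intro hjk
          rcases key k hjk with h' | h'
          · exact Or.inl h'.symm
          · exact Or.inr (by rw [h', sub_add_cancel])
        · rintro (rfl | h')
          · exact hm2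
          · have : k = j - 1 := by rw [h']; exact (add_sub_cancel_right k 1).symm
            rw [this]; exact hm1
      · rw [Function.update_of_ne hji]
        exact hle' j k
    · -- membership
      intro j
      by_cases hji : j = i
      · subst hji; rw [Function.update_self]; exact hmS
      · rw [Function.update_of_ne hji]; exact hxS j hji
  · by_cases hay : ∃ i, y i = a
    · -- a = y i; replace y i by (x i) ⊔ (x (i+1))
      obtain ⟨i, hi⟩ := hay
      have hxS : ∀ j, x j ∈ S := by
        intro j
        refine (hx j).resolve_left fun hj => hxy j i (by rw [hj, hi])
      have hyS : ∀ j, j ≠ i → y j ∈ S := by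
        intro j hj
        refine (hy j).resolve_left fun hj' => hj (hyinj (by rw [hj', hi]))
      set m := x i ⊔ x (i + 1) with hm
      have hmS : m ∈ S := hS.supClosed (hxS _) (hxS _)
      have h1m : x (i + 1) ≤ y i := (hle' (i+1) i).2 (Or.inr rfl)
      have hmy : m ≤ y i := sup_le ((hle' i i).2 (Or.inl rfl)) h1m
      have hxm1 : x i ≤ m := le_sup_left
      have hxm2 : x (i + 1) ≤ m := le_sup_right
      have keyy : ∀ k, m ≤ y k → k = i := by
        intro k hk
        rcases (hle' i k).1 (hxm1.trans hk) with h' | h'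
        · exact h'.symm
        · exfalso
          rcases (hle' (i+1) k).1 (hxm2.trans hk) with h'' | h''
          · have hk1 : k = i - 1 := (sub_eq_iff_eq_add.2 h').symm
            rw [hk1] at h''
            exact hB i h''.symm
          · have hik : i = k := add_right_cancel h''
            rw [← hik] at h'
            exact hA i h'.symm
      have keyxm : ∀ j, x j ≤ m ↔ (j = i ∨ j = i + 1) := by
        intro j
        constructor
        · intro hj
          exact (hle' j i).1 (hj.trans hmy)
        · rintro (rfl | rfl)
          · exact hxm1
          · exact hxm2
      have key2 : ∀ j, ¬ m ≤ x j := by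
        intro j hj
        have h1 : i = j := hxx i j (hxm1.trans hj)
        have h2 : i + 1 = j := hxx (i+1) j (hxm2.trans hj)
        exact hA i (h2.trans h1.symm)
      have hmyk : ∀ k, k ≠ i → m ≠ y k := fun k hk hk' => hk (keyy k (le_of_eq hk'))
      have hmxj : ∀ j, x j ≠ m := fun j hj => key2 j (le_of_eq hj.symm)
      refine ⟨x, Function.update y i m, ⟨hn, hxinj, ?_, ?_, hxx, ?_, ?_, ?_⟩, hxS, ?_⟩
      · intro j k hjk
        by_cases hji : j = i <;> by_cases hki : k = i
        · rw [hji, hki]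
        · rw [hji, Function.update_self, Function.update_of_ne hki] at hjk
          exact absurd hjk (hmyk k hki)
        · rw [hki, Function.update_self, Function.update_of_ne hji] at hjk
          exact absurd hjk.symm (hmyk j hji)
        · rw [Function.update_of_ne hji, Function.update_of_ne hki] at hjk
          exact hyinj hjk
      · intro j k
        by_cases hki : k = i
        · rw [hki, Function.update_self]; exact hmxj j
        · rw [Function.update_of_ne hki]; exact hxy j k
      · intro j k hjk
        by_cases hji : j = i <;> by_cases hki : k = i
        · rw [hji, hki]
        · rw [hji, Function.update_self, Function.update_of_ne hki] at hjk
          exact absurd (keyy k hjk) hki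
        · rw [hki, Function.update_self, Function.update_of_ne hji] at hjk
          exact absurd (hyy j i (hjk.trans hmy)) hji
        · rw [Function.update_of_ne hji, Function.update_of_ne hki] at hjk
          exact hyy j k hjk
      · intro j k hjk
        by_cases hji : j = i
        · rw [hji, Function.update_self] at hjk; exact key2 k hjk
        · rw [Function.update_of_ne hji] at hjk; exact hyx j k hjk
      · intro j k
        rw [coe_iff]
        by_cases hki : k = i
        · subst hki
          rw [Function.update_self]
          exact keyxm j
        · rw [Function.update_of_ne hki]
          exact hle' j k
      · intro j
        by_cases hji : j = i
        · rw [hji, Function.update_self]; exact hmS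
        · rw [Function.update_of_ne hji]; exact hyS j hji
    · push_neg at hax hay
      exact ⟨x, y, ⟨hn, hxinj, hyinj, hxy, hxx, hyy, hyx, hle⟩,
        fun i => (hx i).resolve_left (hax i), fun i => (hy i).resolve_left (hay i)⟩

end CrownErase

lemma not_dismantlable_of_crown {L : Type*} [Lattice L] [Finite L] {n : ℕ}
    {x y : Fin n → L} (h : IsCrown x y) : ¬ Dismantlable L := by
  rintro ⟨c, h1, h2, h3⟩
  have hn3 : 3 ≤ n := h.1
  haveI : Nonempty L := ⟨x ⟨0, by omega⟩⟩
  have hN : 1 ≤ Nat.card L := Nat.card_pos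
  set N := Nat.card L with hNdef
  have key : ∀ d : ℕ, d ≤ N - 1 →
      ∃ x' y' : Fin n → L, IsCrown x' y' ∧ (∀ i, x' i ∈ c (N - d)) ∧
        (∀ i, y' i ∈ c (N - d)) := by
    intro d
    induction d with
    | zero =>
      intro _
      exact ⟨x, y, h, fun i => by simp [h3], fun i => by simp [h3]⟩
    | succ d ih =>
      intro hd
      obtain ⟨x', y', hc, hx', hy'⟩ := ih (by omega)
      set k := N - (d + 1) with hk
      have hkk : N - d = k + 1 := by omega
      obtain ⟨hSub, hcard⟩ := h1 k (by omega) (by omega)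
      obtain ⟨hSub', hcard'⟩ := h1 (k + 1) (by omega) (by omega)
      have hsub : c k ⊆ c (k + 1) := h2 k (by omega) (by omega)
      have hcard2 : (c k).ncard = k := by
        rw [← Nat.card_coe_set_eq]; exact hcard
      have hcard2' : (c (k+1)).ncard = k + 1 := by
        rw [← Nat.card_coe_set_eq]; exact hcard'
      have hdiff : (c (k + 1) \ c k).ncard = 1 := by
        rw [Set.ncard_diff hsub, hcard2, hcard2']
        omega
      obtain ⟨a, hae⟩ := Set.ncard_eq_one.1 hdiff
      have ha : a ∉ c k := by
        have : a ∈ c (k + 1) \ c k := by rw [hae]; exact rfl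
        exact this.2
      have hmem : ∀ b, b ∈ c (k + 1) → b = a ∨ b ∈ c k := by
        intro b hb
        by_cases hbk : b ∈ c k
        · exact Or.inr hbk
        · have : b ∈ c (k + 1) \ c k := ⟨hb, hbk⟩
          rw [hae] at this
          exact Or.inl this
      rw [hkk] at hx' hy'
      exact crown_erase hc hSub ha (fun i => hmem _ (hx' i)) (fun i => hmem _ (hy' i))
  obtain ⟨x', y', hc, hx', hy'⟩ := key (N - 1) le_rfl
  have hone : N - (N - 1) = 1 := by omega
  rw [hone] at hx' hy'
  obtain ⟨_, hcard1⟩ := h1 1 le_rfl hN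
  obtain ⟨z, hz⟩ := Nat.card_eq_one_iff_exists.1 hcard1
  have hxz := hz ⟨x' ⟨0, by omega⟩, hx' _⟩
  have hyz := hz ⟨y' ⟨0, by omega⟩, hy' _⟩
  exact hc.2.2.2.1 ⟨0, by omega⟩ ⟨0, by omega⟩
    (Subtype.ext_iff.1 (hxz.trans hyz.symm))

section S4

open Equiv

abbrev G4 := Equiv.Perm (Fin 4)

lemma mem_closure_swap {s : G4} (hs : s * s = 1) {g : G4}
    (hg : g ∈ Subgroup.closure {s}) : g = 1 ∨ g = s := by
  induction hg using Subgroup.closure_induction with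
  | mem x hx => exact Or.inr (by simpa using hx)
  | one => exact Or.inl rfl
  | mul a b _ _ ha hb =>
    rcases ha with rfl | rfl <;> rcases hb with rfl | rfl <;> simp [hs]
  | inv a _ ha =>
    rcases ha with rfl | rfl
    · exact Or.inl (by simp)
    · right
      rw [inv_eq_iff_mul_eq_one, hs]

lemma closure_fixes {S : Set G4} {p : Fin 4} (h : ∀ g ∈ S, g p = p) {g : G4}
    (hg : g ∈ Subgroup.closure S) : g p = p := by
  induction hg using Subgroup.closure_induction with
  | mem x hx => exact h x hx
  | one => rfl
  | mul a b _ _ ha hb => simp [Equiv.Perm.mul_apply, hb, ha]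
  | inv a _ ha =>
    nth_rewrite 1 [← ha]
    exact Equiv.symm_apply_apply a p

end S4


lemma closure_swap_mem_cases {s : G4} (hs : s * s = 1) {g : G4}
    (hg : g ∈ Subgroup.closure {s}) : g = 1 ∨ g = s := mem_closure_swap hs hg

lemma K_not_le {A B : Set G4} {g : G4} {p : Fin 4} (hg : g ∈ A)
    (hfix : ∀ h ∈ B, h p = p) (hmove : g p ≠ p) :
    ¬ Subgroup.closure A ≤ Subgroup.closure B := fun hle =>
  hmove (closure_fixes hfix (hle (Subgroup.subset_closure hg)))

lemma K_not_le_H {B : Set G4} {g s : G4} (hs : s * s = 1) (hg : g ∈ B)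
    (h1 : g ≠ 1) (h2 : g ≠ s) :
    ¬ Subgroup.closure B ≤ Subgroup.closure {s} := by
  intro hle
  have := mem_closure_swap hs (hle (Subgroup.subset_closure hg))
  tauto

lemma H_le_K {s : G4} {B : Set G4} (h : s ∈ Subgroup.closure B) :
    Subgroup.closure {s} ≤ Subgroup.closure B :=
  (Subgroup.closure_le _).2 (Set.singleton_subset_iff.2 h)

lemma fix_pair {c s : G4} {p : Fin 4} (h1 : c p = p) (h2 : s p = p) :
    ∀ h ∈ ({c, s} : Set G4), h p = p := by
  rintro h hh
  simp only [Set.mem_insert_iff, Set.mem_singleton_iff] at hh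
  rcases hh with rfl | rfl
  · exact h1
  · exact h2

lemma mem_pair_left (c s : G4) : c ∈ ({c, s} : Set G4) := Set.mem_insert _ _
lemma mem_pair_right (c s : G4) : s ∈ ({c, s} : Set G4) :=
  Set.mem_insert_of_mem _ rfl

theorem stmt9 :
    IsCrown
      (![Subgroup.closure {Equiv.swap (0 : Fin 4) 1},
         Subgroup.closure {Equiv.swap (0 : Fin 4) 2},
         Subgroup.closure {Equiv.swap (0 : Fin 4) 3}] :
        Fin 3 → Subgroup (Equiv.Perm (Fin 4)))
      ![Subgroup.closure {Equiv.swap (0 : Fin 4) 1 * Equiv.swap (1 : Fin 4) 2,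
          Equiv.swap (0 : Fin 4) 1},
        Subgroup.closure {Equiv.swap (0 : Fin 4) 2 * Equiv.swap (2 : Fin 4) 3,
          Equiv.swap (0 : Fin 4) 2},
        Subgroup.closure {Equiv.swap (0 : Fin 4) 1 * Equiv.swap (1 : Fin 4) 3,
          Equiv.swap (0 : Fin 4) 3}] ∧
    ¬ Dismantlable (Subgroup (Equiv.Perm (Fin 4))) := by
  have fixK1 : ∀ h ∈ ({Equiv.swap (0 : Fin 4) 1 * Equiv.swap (1 : Fin 4) 2,
      Equiv.swap (0 : Fin 4) 1} : Set G4), h 3 = 3 := fix_pair (by decide) (by decide)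
  have fixK2 : ∀ h ∈ ({Equiv.swap (0 : Fin 4) 2 * Equiv.swap (2 : Fin 4) 3,
      Equiv.swap (0 : Fin 4) 2} : Set G4), h 1 = 1 := fix_pair (by decide) (by decide)
  have fixK3 : ∀ h ∈ ({Equiv.swap (0 : Fin 4) 1 * Equiv.swap (1 : Fin 4) 3,
      Equiv.swap (0 : Fin 4) 3} : Set G4), h 2 = 2 := fix_pair (by decide) (by decide)
  have m00 : Equiv.swap (0 : Fin 4) 1 ∈ Subgroup.closure
      ({Equiv.swap (0 : Fin 4) 1 * Equiv.swap (1 : Fin 4) 2,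
        Equiv.swap (0 : Fin 4) 1} : Set G4) :=
    Subgroup.subset_closure (mem_pair_right _ _)
  have m10 : Equiv.swap (0 : Fin 4) 2 ∈ Subgroup.closure
      ({Equiv.swap (0 : Fin 4) 1 * Equiv.swap (1 : Fin 4) 2,
        Equiv.swap (0 : Fin 4) 1} : Set G4) := by
    have hm : (Equiv.swap (0 : Fin 4) 1 * Equiv.swap (1 : Fin 4) 2) * Equiv.swap (0 : Fin 4) 1 ∈
        Subgroup.closure ({Equiv.swap (0 : Fin 4) 1 * Equiv.swap (1 : Fin 4) 2,
          Equiv.swap (0 : Fin 4) 1} : Set G4) :=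
      mul_mem (Subgroup.subset_closure (mem_pair_left _ _))
        (Subgroup.subset_closure (mem_pair_right _ _))
    have he : Equiv.swap (0 : Fin 4) 2 =
        (Equiv.swap (0 : Fin 4) 1 * Equiv.swap (1 : Fin 4) 2) * Equiv.swap (0 : Fin 4) 1 := by
      decide
    rwa [← he] at hm
  have m11 : Equiv.swap (0 : Fin 4) 2 ∈ Subgroup.closure
      ({Equiv.swap (0 : Fin 4) 2 * Equiv.swap (2 : Fin 4) 3,
        Equiv.swap (0 : Fin 4) 2} : Set G4) :=
    Subgroup.subset_closure (mem_pair_right _ _)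
  have m21 : Equiv.swap (0 : Fin 4) 3 ∈ Subgroup.closure
      ({Equiv.swap (0 : Fin 4) 2 * Equiv.swap (2 : Fin 4) 3,
        Equiv.swap (0 : Fin 4) 2} : Set G4) := by
    have hm : (Equiv.swap (0 : Fin 4) 2 * Equiv.swap (2 : Fin 4) 3) * Equiv.swap (0 : Fin 4) 2 ∈
        Subgroup.closure ({Equiv.swap (0 : Fin 4) 2 * Equiv.swap (2 : Fin 4) 3,
          Equiv.swap (0 : Fin 4) 2} : Set G4) :=
      mul_mem (Subgroup.subset_closure (mem_pair_left _ _))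
        (Subgroup.subset_closure (mem_pair_right _ _))
    have he : Equiv.swap (0 : Fin 4) 3 =
        (Equiv.swap (0 : Fin 4) 2 * Equiv.swap (2 : Fin 4) 3) * Equiv.swap (0 : Fin 4) 2 := by
      decide
    rwa [← he] at hm
  have m22 : Equiv.swap (0 : Fin 4) 3 ∈ Subgroup.closure
      ({Equiv.swap (0 : Fin 4) 1 * Equiv.swap (1 : Fin 4) 3,
        Equiv.swap (0 : Fin 4) 3} : Set G4) :=
    Subgroup.subset_closure (mem_pair_right _ _)
  have m02 : Equiv.swap (0 : Fin 4) 1 ∈ Subgroup.closure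
      ({Equiv.swap (0 : Fin 4) 1 * Equiv.swap (1 : Fin 4) 3,
        Equiv.swap (0 : Fin 4) 3} : Set G4) := by
    have hm : Equiv.swap (0 : Fin 4) 3 * (Equiv.swap (0 : Fin 4) 1 * Equiv.swap (1 : Fin 4) 3) ∈
        Subgroup.closure ({Equiv.swap (0 : Fin 4) 1 * Equiv.swap (1 : Fin 4) 3,
          Equiv.swap (0 : Fin 4) 3} : Set G4) :=
      mul_mem (Subgroup.subset_closure (mem_pair_right _ _))
        (Subgroup.subset_closure (mem_pair_left _ _))
    have he : Equiv.swap (0 : Fin 4) 1 =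
        Equiv.swap (0 : Fin 4) 3 * (Equiv.swap (0 : Fin 4) 1 * Equiv.swap (1 : Fin 4) 3) := by
      decide
    rwa [← he] at hm
  have hcrown : IsCrown
      (![Subgroup.closure {Equiv.swap (0 : Fin 4) 1},
         Subgroup.closure {Equiv.swap (0 : Fin 4) 2},
         Subgroup.closure {Equiv.swap (0 : Fin 4) 3}] :
        Fin 3 → Subgroup (Equiv.Perm (Fin 4)))
      ![Subgroup.closure {Equiv.swap (0 : Fin 4) 1 * Equiv.swap (1 : Fin 4) 2,
          Equiv.swap (0 : Fin 4) 1},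
        Subgroup.closure {Equiv.swap (0 : Fin 4) 2 * Equiv.swap (2 : Fin 4) 3,
          Equiv.swap (0 : Fin 4) 2},
        Subgroup.closure {Equiv.swap (0 : Fin 4) 1 * Equiv.swap (1 : Fin 4) 3,
          Equiv.swap (0 : Fin 4) 3}] := by
    refine ⟨by norm_num, ?_, ?_, ?_, ?_, ?_, ?_, ?_⟩
    · -- injective x
      intro i j hij
      fin_cases i <;> fin_cases j <;>
        first
        | rfl
        | (exfalso
           have := mem_closure_swap (by decide)
             ((le_of_eq hij) (Subgroup.subset_closure rfl))
           revert this
           decide)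
    · -- injective y
      intro i j hij
      fin_cases i <;> fin_cases j
      · rfl
      · exact absurd (le_of_eq hij) (K_not_le (mem_pair_left _ _) fixK2 (by decide))
      · exact absurd (le_of_eq hij) (K_not_le (mem_pair_left _ _) fixK3 (by decide))
      · exact absurd (le_of_eq hij) (K_not_le (mem_pair_left _ _) fixK1 (by decide))
      · rfl
      · exact absurd (le_of_eq hij) (K_not_le (mem_pair_left _ _) fixK3 (by decide))
      · exact absurd (le_of_eq hij) (K_not_le (mem_pair_left _ _) fixK1 (by decide))
      · exact absurd (le_of_eq hij) (K_not_le (mem_pair_left _ _) fixK2 (by decide))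
      · rfl
    · -- x i ≠ y j
      intro i j hij
      fin_cases i <;> fin_cases j <;>
        (have := mem_closure_swap (by decide)
          ((le_of_eq hij.symm) (Subgroup.subset_closure (mem_pair_left _ _)))
         revert this
         decide)
    · -- x i ≤ x j → i = j
      intro i j hij
      fin_cases i <;> fin_cases j <;>
        first
        | rfl
        | (exfalso
           have := mem_closure_swap (by decide) (hij (Subgroup.subset_closure rfl))
           revert this
           decide)
    · -- y i ≤ y j → i = j
      intro i j hij
      fin_cases i <;> fin_cases j
      · rfl
      · exact absurd hij (K_not_le (mem_pair_left _ _) fixK2 (by decide))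
      · exact absurd hij (K_not_le (mem_pair_left _ _) fixK3 (by decide))
      · exact absurd hij (K_not_le (mem_pair_left _ _) fixK1 (by decide))
      · rfl
      · exact absurd hij (K_not_le (mem_pair_left _ _) fixK3 (by decide))
      · exact absurd hij (K_not_le (mem_pair_left _ _) fixK1 (by decide))
      · exact absurd hij (K_not_le (mem_pair_left _ _) fixK2 (by decide))
      · rfl
    · -- ¬ y i ≤ x j
      intro i j
      fin_cases i <;> fin_cases j <;>
        exact K_not_le_H (by decide) (mem_pair_left _ _) (by decide) (by decide)
    · -- x i ≤ y j ↔ ...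
      intro i j
      fin_cases i <;> fin_cases j
      · exact iff_of_true (H_le_K m00) (by decide)
      · exact iff_of_false (K_not_le rfl fixK2 (by decide)) (by decide)
      · exact iff_of_true (H_le_K m02) (by decide)
      · exact iff_of_true (H_le_K m10) (by decide)
      · exact iff_of_true (H_le_K m11) (by decide)
      · exact iff_of_false (K_not_le rfl fixK3 (by decide)) (by decide)
      · exact iff_of_false (K_not_le rfl fixK1 (by decide)) (by decide)
      · exact iff_of_true (H_le_K m21) (by decide)
      · exact iff_of_true (H_le_K m22) (by decide)
  exact ⟨hcrown, not_dismantlable_of_crown hcrown⟩
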